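/- Let H be an inner product space over ℂ, x, y, e ∈ H with ‖e‖ = 1, and a, A, b, B ∈ ℂ with Re(A·conj(a)) > 0, Re(B·conj(b)) > 0. If Re⟨Ae − x, x − ae⟩ ≥ 0 and Re⟨Be − y, y − be⟩ ≥ 0, then |⟨x,y⟩ − ⟨x,e⟩⟨e,y⟩| ≤ (1/4)·(|A − a||B − b| / √(Re(A·conj(a))·Re(B·conj(b))))·|⟨x,e⟩⟨e,y⟩|. -/

import Mathlib

open scoped InnerProductSpace ComplexConjugate


lemma aux15 {E : Type*} [NormedAddCommGroup E] [InnerProductSpace ℂ E]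
    (x e : E) (he : ‖e‖ = 1) (a A : ℂ) (hAa : 0 < (A * conj a).re)
    (hx : 0 ≤ (⟪A • e - x, x - a • e⟫_ℂ).re) :
    ‖x - ⟪e, x⟫_ℂ • e‖ ^ 2 ≤
      1 / 4 * (‖A - a‖) ^ 2 * (‖⟪x, e⟫_ℂ‖) ^ 2 / (A * conj a).re := by
  set t := ⟪x, e⟫_ℂ with ht
  have het : ⟪e, x⟫_ℂ = conj t := by rw [ht, ← inner_conj_symm]
  have hee : ⟪e, e⟫_ℂ = 1 := by
    simp [inner_self_eq_norm_sq_to_K, he]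
  have hval : ⟪A • e - x, x - a • e⟫_ℂ
      = conj (A * t) + a * t - conj (A * conj a) - (‖x‖ : ℂ) ^ 2 := by
    simp [inner_sub_left, inner_sub_right, inner_smul_left, inner_smul_right, hee, het,
      inner_self_eq_norm_sq_to_K, he, ← ht]
    ring
  rw [hval] at hx
  simp only [Complex.sub_re, Complex.add_re, Complex.conj_re] at hx
  have hxre : ((‖x‖ : ℂ) ^ 2).re = ‖x‖ ^ 2 := by
    norm_cast
  rw [hxre] at hx
  have hsum : (A * t).re + (a * t).re = ((A + a) * t).re := by
    rw [add_mul, Complex.add_re]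
  have hre : ((A + a) * t).re ≤ ‖A + a‖ * ‖t‖ := by
    calc ((A + a) * t).re ≤ ‖(A + a) * t‖ := Complex.re_le_norm _
    _ = ‖A + a‖ * ‖t‖ := norm_mul _ _
  have hid : (‖A + a‖) ^ 2 = (‖A - a‖) ^ 2 + 4 * (A * conj a).re := by
    rw [Complex.sq_norm, Complex.sq_norm]
    simp [Complex.normSq_apply, Complex.add_re, Complex.sub_re, Complex.add_im, Complex.sub_im,
      Complex.mul_re, Complex.conj_re, Complex.conj_im]
    ring
  have hnorm : ‖x - ⟪e, x⟫_ℂ • e‖ ^ 2 = ‖x‖ ^ 2 - (‖t‖) ^ 2 := by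
    rw [het]
    rw [norm_sub_sq (𝕜 := ℂ)]
    have h1 : ⟪x, conj t • e⟫_ℂ = conj t * t := by
      rw [inner_smul_right, ht]
    have h2 : ‖conj t • e‖ = ‖t‖ := by
      rw [norm_smul, he]
      simp
    rw [h1, h2]
    have : (conj t * t).re = (‖t‖) ^ 2 := by
      rw [Complex.sq_norm]
      simp [Complex.normSq_apply, Complex.mul_re, Complex.conj_re, Complex.conj_im]
    simp only [RCLike.re_to_complex]
    rw [this]
    ring
  rw [hnorm, le_div_iff₀ hAa]
  have habs : 0 ≤ ‖t‖ := norm_nonneg t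
  have hAa' : 0 ≤ ‖A + a‖ := norm_nonneg _
  nlinarith [sq_nonneg (‖A + a‖ * ‖t‖ - 2 * (A * conj a).re), hx, hre, hid,
    mul_le_mul_of_nonneg_left hre (le_of_lt hAa)]


theorem stmt_15 {E : Type*} [NormedAddCommGroup E] [InnerProductSpace ℂ E]
    (x y e : E) (he : ‖e‖ = 1) (a A b B : ℂ)
    (hAa : 0 < (A * conj a).re) (hBb : 0 < (B * conj b).re)
    (hx : 0 ≤ (⟪A • e - x, x - a • e⟫_ℂ).re) (hy : 0 ≤ (⟪B • e - y, y - b • e⟫_ℂ).re) :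
    ‖⟪x, y⟫_ℂ - ⟪x, e⟫_ℂ * ⟪e, y⟫_ℂ‖ ≤
      (1 / 4) * (‖A - a‖ * ‖B - b‖ /
        Real.sqrt ((A * conj a).re * (B * conj b).re)) *
        ‖⟪x, e⟫_ℂ * ⟪e, y⟫_ℂ‖ := by
  set p := (A * conj a).re with hp
  set q := (B * conj b).re with hq
  set x' := x - ⟪e, x⟫_ℂ • e with hx'def
  set y' := y - ⟪e, y⟫_ℂ • e with hy'def
  have hee : ⟪e, e⟫_ℂ = 1 := by simp [inner_self_eq_norm_sq_to_K, he]
  have h1 : ⟪x', y'⟫_ℂ = ⟪x, y⟫_ℂ - ⟪x, e⟫_ℂ * ⟪e, y⟫_ℂ := by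
    simp [hx'def, hy'def, inner_sub_left, inner_sub_right, inner_smul_left, inner_smul_right,
      hee, inner_conj_symm, he, mul_comm]
  have h2 : ‖⟪x', y'⟫_ℂ‖ ≤ ‖x'‖ * ‖y'‖ := by
    exact norm_inner_le_norm x' y'
  have hbx : ‖x'‖ ^ 2 ≤ 1 / 4 * (‖A - a‖) ^ 2 * (‖⟪x, e⟫_ℂ‖) ^ 2 / p :=
    aux15 x e he a A hAa hx
  have hby : ‖y'‖ ^ 2 ≤ 1 / 4 * (‖B - b‖) ^ 2 * (‖⟪y, e⟫_ℂ‖) ^ 2 / q :=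
    aux15 y e he b B hBb hy
  have hey : ‖⟪e, y⟫_ℂ‖ = ‖⟪y, e⟫_ℂ‖ := by
    rw [← inner_conj_symm y e]
    exact (Complex.norm_conj _).symm
  -- show LHS^2 ≤ RHS^2 then take sqrt
  have hL : 0 ≤ ‖⟪x, y⟫_ℂ - ⟪x, e⟫_ℂ * ⟪e, y⟫_ℂ‖ := norm_nonneg _
  have hpq : 0 < p * q := mul_pos hAa hBb
  have hsq : Real.sqrt (p * q) ^ 2 = p * q := Real.sq_sqrt hpq.le
  have hsqpos : 0 < Real.sqrt (p * q) := Real.sqrt_pos.mpr hpq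
  have hR : 0 ≤ (1 / 4) * (‖A - a‖ * ‖B - b‖ / Real.sqrt (p * q)) *
      ‖⟪x, e⟫_ℂ * ⟪e, y⟫_ℂ‖ := by
    positivity
  have key : (‖⟪x, y⟫_ℂ - ⟪x, e⟫_ℂ * ⟪e, y⟫_ℂ‖) ^ 2 ≤
      ((1 / 4) * (‖A - a‖ * ‖B - b‖ / Real.sqrt (p * q)) *
        ‖⟪x, e⟫_ℂ * ⟪e, y⟫_ℂ‖) ^ 2 := by
    have h3 : (‖⟪x, y⟫_ℂ - ⟪x, e⟫_ℂ * ⟪e, y⟫_ℂ‖) ^ 2 ≤ ‖x'‖ ^ 2 * ‖y'‖ ^ 2 := by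
      rw [← h1]
      calc ‖⟪x', y'⟫_ℂ‖ ^ 2 ≤ (‖x'‖ * ‖y'‖) ^ 2 := by
            exact pow_le_pow_left₀ (norm_nonneg _) h2 2
      _ = ‖x'‖ ^ 2 * ‖y'‖ ^ 2 := by ring
    have h4 : ‖x'‖ ^ 2 * ‖y'‖ ^ 2 ≤
        (1 / 4 * (‖A - a‖) ^ 2 * (‖⟪x, e⟫_ℂ‖) ^ 2 / p) *
        (1 / 4 * (‖B - b‖) ^ 2 * (‖⟪y, e⟫_ℂ‖) ^ 2 / q) := by
      have := mul_le_mul hbx hby (sq_nonneg _) (by positivity)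
      exact this
    have h5 : (1 / 4 * (‖A - a‖) ^ 2 * (‖⟪x, e⟫_ℂ‖) ^ 2 / p) *
        (1 / 4 * (‖B - b‖) ^ 2 * (‖⟪y, e⟫_ℂ‖) ^ 2 / q) =
        ((1 / 4) * (‖A - a‖ * ‖B - b‖ / Real.sqrt (p * q)) *
          ‖⟪x, e⟫_ℂ * ⟪e, y⟫_ℂ‖) ^ 2 := by
      rw [norm_mul, hey, mul_pow, mul_pow, div_pow, div_pow, hsq]
      field_simp
    linarith [h3, h4, le_of_eq h5]
  calc ‖⟪x, y⟫_ℂ - ⟪x, e⟫_ℂ * ⟪e, y⟫_ℂ‖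
      = Real.sqrt ((‖⟪x, y⟫_ℂ - ⟪x, e⟫_ℂ * ⟪e, y⟫_ℂ‖) ^ 2) :=
        (Real.sqrt_sq hL).symm
    _ ≤ Real.sqrt (((1 / 4) * (‖A - a‖ * ‖B - b‖ / Real.sqrt (p * q)) *
        ‖⟪x, e⟫_ℂ * ⟪e, y⟫_ℂ‖) ^ 2) := Real.sqrt_le_sqrt key
    _ = _ := Real.sqrt_sq hR
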